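/- Let F = X + H be a polynomial map on k^n with H homogeneous of degree d ≥ 2 and det(I + JH) = 1 identically. Then JH is nilpotent: JH(X)^n = 0 for every X ∈ k^n. -/

import Mathlib

open MvPolynomial

lemma aux_pderiv_homog {k : Type*} [CommRing k] {σ : Type*} [DecidableEq σ] {d : ℕ}
    {p : MvPolynomial σ k} (hp : p.IsHomogeneous d) (j : σ) :
    (pderiv j p).IsHomogeneous (d - 1) := by
  conv_lhs => rw [← p.support_sum_monomial_coeff]
  rw [map_sum]
  apply IsHomogeneous.sum
  intro m hm
  rw [pderiv_monomial]
  by_cases h : m j = 0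
  · simp [h]
    exact isHomogeneous_zero _ _ _
  · apply isHomogeneous_monomial
    have hmd : Finsupp.weight 1 m = d := hp (MvPolynomial.mem_support_iff.mp hm)
    have key : (m - Finsupp.single j 1) + Finsupp.single j 1 = m := by
      ext i
      rcases eq_or_ne i j with rfl | hij
      · simp [Finsupp.single_apply]; omega
      · simp [Finsupp.single_apply, hij.symm]
    have hw : Finsupp.weight (1 : σ → ℕ) (m - Finsupp.single j 1) + Finsupp.weight (1 : σ → ℕ) (Finsupp.single j 1)
        = Finsupp.weight (1 : σ → ℕ) m := by rw [← map_add, key]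
    have hs : (Finsupp.weight (1 : σ → ℕ)) (Finsupp.single j 1) = 1 := by
      simp [Finsupp.weight_apply, Finsupp.sum_single_index]
    rw [Finsupp.degree_eq_weight_one]
    rw [hs, hmd] at hw
    change Finsupp.weight (1 : σ → ℕ) _ = _
    omega

lemma aux_eval_smul {k : Type*} [CommRing k] {σ : Type*} {d : ℕ}
    {p : MvPolynomial σ k} (hp : p.IsHomogeneous d) (c : k) (x : σ → k) :
    eval (fun i => c * x i) p = c ^ d * eval x p := by
  rw [eval_eq, eval_eq, Finset.mul_sum]
  apply Finset.sum_congr rfl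
  intro m hm
  have hmd : (∑ i ∈ m.support, m i) = d := by
    have := hp (MvPolynomial.mem_support_iff.mp hm)
    change Finsupp.weight (fun _ => 1) m = d at this
    rwa [← Finsupp.degree_eq_weight_one, Finsupp.degree] at this
  rw [← hmd]
  simp_rw [mul_pow, Finset.prod_mul_distrib, Finset.prod_pow_eq_pow_sum]
  ring



/-- The Jacobian matrix of the polynomial map `H : k^n → k^n`, as a matrix of polynomials. -/
noncomputable def jacMat {k : Type*} [Field k] {n : ℕ}
    (H : Fin n → MvPolynomial (Fin n) k) : Matrix (Fin n) (Fin n) (MvPolynomial (Fin n) k) :=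
  Matrix.of fun i j => MvPolynomial.pderiv j (H i)

/-- The Jacobian matrix of `H` evaluated at a point `x ∈ k^n`. -/
noncomputable def jacEval {k : Type*} [Field k] {n : ℕ}
    (H : Fin n → MvPolynomial (Fin n) k) (x : Fin n → k) : Matrix (Fin n) (Fin n) k :=
  Matrix.of fun i j => MvPolynomial.eval x (MvPolynomial.pderiv j (H i))

/-- If `H` is homogeneous of degree `d ≥ 2` and `det(I + JH) = 1` identically, then `JH` is
nilpotent: `JH(x)^n = 0` for every point `x`. -/
theorem jacobian_nilpotent_of_homogeneous_keller
    {k : Type*} [Field k] [CharZero k] {n : ℕ} (d : ℕ) (hd : 2 ≤ d)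
    (H : Fin n → MvPolynomial (Fin n) k)
    (hhom : ∀ i, (H i).IsHomogeneous d)
    (hkeller : (1 + jacMat H).det = 1) :
    ∀ x : Fin n → k, (jacEval H x) ^ n = 0 := by
  intro x
  set A : Matrix (Fin n) (Fin n) k := jacEval H x with hA
  -- Step 1: det (1 + jacEval H y) = 1 for every point y
  have hev : ∀ y : Fin n → k, (1 + jacEval H y).det = 1 := by
    intro y
    have h1 := congrArg (MvPolynomial.eval y) hkeller
    rw [RingHom.map_det, RingHom.mapMatrix_apply] at h1
    have h2 : (1 + jacMat H).map (MvPolynomial.eval y) = 1 + jacEval H y := by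
      ext i j
      by_cases hij : i = j <;>
        simp [Matrix.map_apply, Matrix.add_apply, Matrix.one_apply, hij, jacMat, jacEval]
    rw [h2] at h1
    simpa using h1
  -- Step 2: scaling
  have hscale : ∀ c : k, jacEval H (fun i => c * x i) = c ^ (d - 1) • A := by
    intro c
    ext i j
    have := aux_eval_smul (aux_pderiv_homog (hhom i) j) c x
    simp only [jacEval, Matrix.smul_apply, Matrix.of_apply, smul_eq_mul] at this ⊢
    simpa [jacEval, hA] using this
  -- Step 3: evaluation of charpolyRev
  have hrev_eval : ∀ s : k, Polynomial.eval s A.charpolyRev = (1 - s • A).det := by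
    intro s
    rw [Matrix.charpolyRev, ← Polynomial.coe_evalRingHom, RingHom.map_det]
    rw [RingHom.mapMatrix_apply]
    congr 1
    ext i j
    by_cases hij : i = j
    · subst hij
      simp only [Matrix.map_apply, Matrix.sub_apply, Matrix.smul_apply, Matrix.one_apply_eq,
        smul_eq_mul, map_sub, map_one, Polynomial.eval_mul, Polynomial.coe_evalRingHom,
        Polynomial.eval_X, Polynomial.eval_C]
      rw [Polynomial.eval_sub, Polynomial.eval_mul, Polynomial.eval_one, Polynomial.eval_X,
        Polynomial.eval_C, mul_comm]
    · simp only [Matrix.map_apply, Matrix.sub_apply, Matrix.smul_apply,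
        Matrix.one_apply_ne hij, smul_eq_mul, map_sub, map_zero, Polynomial.eval_mul,
        Polynomial.coe_evalRingHom, Polynomial.eval_X, Polynomial.eval_C]
      rw [Polynomial.eval_sub, Polynomial.eval_mul, Polynomial.eval_zero, Polynomial.eval_X,
        Polynomial.eval_C, mul_comm]
  -- Step 4: charpolyRev A = 1
  have hrev : A.charpolyRev = 1 := by
    have hcomp : (A.charpolyRev - 1).comp (Polynomial.C (-1) * Polynomial.X ^ (d - 1)) = 0 := by
      apply Polynomial.funext
      intro c
      rw [Polynomial.eval_comp]
      simp only [Polynomial.eval_mul, Polynomial.eval_C, Polynomial.eval_pow, Polynomial.eval_X,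
        Polynomial.eval_sub, Polynomial.eval_one, Polynomial.eval_zero]
      rw [hrev_eval]
      have : (1 : Matrix (Fin n) (Fin n) k) - (-1 * c ^ (d - 1)) • A
          = 1 + jacEval H (fun i => c * x i) := by
        rw [hscale c]; ring_nf; rw [sub_eq_add_neg]; congr 1; rw [← neg_smul]; ring_nf
      rw [this, hev]
      simp [mul_comm]
    rcases Polynomial.comp_eq_zero_iff.mp hcomp with h | ⟨_, h⟩
    · exact sub_eq_zero.mp h
    · exfalso
      have hdeg : (Polynomial.C (-1 : k) * Polynomial.X ^ (d - 1)).natDegree = d - 1 := by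
        rw [Polynomial.natDegree_C_mul (by norm_num), Polynomial.natDegree_X_pow]
      rw [h] at hdeg
      rw [Polynomial.natDegree_C] at hdeg
      omega
  -- Step 5: charpoly A = X ^ n
  have hcp : A.charpoly = Polynomial.X ^ n := by
    have hrc : A.charpoly.reverse = 1 := by rw [Matrix.reverse_charpoly, hrev]
    have hdeg : A.charpoly.natDegree = n := by
      rw [A.charpoly_natDegree_eq_dim, Fintype.card_fin]
    have hmon := A.charpoly_monic
    ext m
    rcases lt_trichotomy m n with hj | hj | hj
    · have hc : A.charpoly.coeff m = A.charpoly.reverse.coeff (n - m) := by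
        rw [Polynomial.coeff_reverse, hdeg, Polynomial.revAt_le (by omega), Nat.sub_sub_self hj.le]
      rw [hc, hrc, Polynomial.coeff_one, Polynomial.coeff_X_pow]
      have h0 : ¬ (n - m = 0) := by omega
      simp [h0, Nat.ne_of_lt hj]
    · have hc := hmon.coeff_natDegree
      rw [hdeg] at hc
      rw [hj, Polynomial.coeff_X_pow, if_pos rfl]
      exact hc
    · rw [Polynomial.coeff_X_pow, if_neg (by omega), Polynomial.coeff_eq_zero_of_natDegree_lt]
      omega
  -- Step 6: Cayley-Hamilton
  have := A.aeval_self_charpoly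
  rw [hcp, map_pow, Polynomial.aeval_X] at this
  exact this
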